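/- The modal logic K5 = K ⊕ (◇□p→□p) has the finite model property: every formula not in K5 is falsified in a finite Kripke model based on a Euclidean frame. -/

import Mathlib

/-- Modal formulas with ◇ primitive. -/
inductive F : Type
  | var : Nat → F
  | neg : F → F
  | imp : F → F → F
  | dia : F → F
deriving DecidableEq

/-- □φ is defined as ¬◇¬φ. -/
def F.box (φ : F) : F := .neg (.dia (.neg φ))

/-- Kripke models. -/
structure Model where
  W : Type
  R : W → W → Prop
  V : Nat → W → Prop

/-- Standard Kripke satisfaction. -/
def Model.sat (M : Model) : M.W → F → Prop
  | w, .var n => M.V n w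
  | w, .neg φ => ¬ M.sat w φ
  | w, .imp φ ψ => M.sat w φ → M.sat w ψ
  | w, .dia φ => ∃ u, M.R w u ∧ M.sat u φ

/-- φ ↔ ψ defined via ¬ and →. -/
def F.iff' (φ ψ : F) : F := .neg ((φ.imp ψ).imp (.neg (ψ.imp φ)))

/-- Propositional evaluation treating ◇-formulas as atoms. -/
def evalP (v : F → Prop) : F → Prop
  | .var n => v (.var n)
  | .neg φ => ¬ evalP v φ
  | .imp φ ψ => evalP v φ → evalP v ψ
  | .dia φ => v (.dia φ)

/-- Instances of classical propositional tautologies. -/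
def TautInst (φ : F) : Prop := ∀ v : F → Prop, evalP v φ

/-- Provability in K5 = K ⊕ (◇□p → □p): propositional tautologies, K, dual, the 5 axiom,
modus ponens and necessitation. -/
inductive ProvK5 : F → Prop
  | taut {φ} : TautInst φ → ProvK5 φ
  | axK (φ ψ) : ProvK5 ((F.box (φ.imp ψ)).imp ((F.box φ).imp (F.box ψ)))
  | axDual (φ) : ProvK5 ((F.dia φ).iff' (F.neg (F.box (F.neg φ))))
  | ax5 (φ) : ProvK5 ((F.dia (F.box φ)).imp (F.box φ))
  | mp {φ ψ} : ProvK5 (φ.imp ψ) → ProvK5 φ → ProvK5 ψ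
  | nec {φ} : ProvK5 φ → ProvK5 (F.box φ)

/-- A relation is Euclidean if wRu and wRv imply uRv. -/
def Euclidean {W : Type} (R : W → W → Prop) : Prop :=
  ∀ w u v : W, R w u → R w v → R u v

namespace K5FMP
open Classical

/-! ### Propositional infrastructure -/

/-- Conjunction of a list of formulas. -/
def conj : List F → F
  | [] => (F.var 0).imp (F.var 0)
  | a :: l => F.neg (a.imp (F.neg (conj l)))

lemma evalP_conj (v : F → Prop) : ∀ l : List F, evalP v (conj l) ↔ ∀ ψ ∈ l, evalP v ψ
  | [] => by simp [conj, evalP]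
  | a :: l => by
      have ih := evalP_conj v l
      simp only [conj, evalP, List.mem_cons]
      constructor
      · intro h ψ hψ
        rcases _root_.not_imp.1 h with ⟨ha, hx⟩
        have hl := ih.1 (not_not.1 hx)
        rcases hψ with rfl | hψ
        · exact ha
        · exact hl ψ hψ
      · intro h hc
        exact hc (h a (Or.inl rfl)) (ih.2 fun ψ hψ => h ψ (Or.inr hψ))

/-- Derivability from a set of hypotheses. -/
def derives (Γ : Set F) (χ : F) : Prop :=
  ∃ l : List F, (∀ ψ ∈ l, ψ ∈ Γ) ∧ ProvK5 ((conj l).imp χ)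

def falsum : F := F.neg ((F.var 0).imp (F.var 0))

def Con (Γ : Set F) : Prop := ¬ derives Γ falsum

lemma derives_mono {Γ Δ : Set F} {χ : F} (h : derives Γ χ) (hs : Γ ⊆ Δ) : derives Δ χ := by
  obtain ⟨l, hl, hp⟩ := h
  exact ⟨l, fun ψ hψ => hs (hl ψ hψ), hp⟩

lemma derives_of_mem {Γ : Set F} {ψ : F} (h : ψ ∈ Γ) : derives Γ ψ :=
  ⟨[ψ], by simpa using h, ProvK5.taut (fun v => by simp [evalP, evalP_conj])⟩

lemma derives_of_prov {Γ : Set F} {ψ : F} (h : ProvK5 ψ) : derives Γ ψ :=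
  ⟨[], by simp, ProvK5.mp (ProvK5.taut (fun v => by simp [evalP]; exact fun h _ => h)) h⟩

lemma derives_mp {Γ : Set F} {φ ψ : F} (h1 : derives Γ (φ.imp ψ)) (h2 : derives Γ φ) :
    derives Γ ψ := by
  obtain ⟨l1, hl1, hp1⟩ := h1
  obtain ⟨l2, hl2, hp2⟩ := h2
  refine ⟨l1 ++ l2, by intro x hx; rcases List.mem_append.1 hx with h | h
                       exacts [hl1 x h, hl2 x h], ?_⟩
  have t : TautInst ((((conj l1).imp (φ.imp ψ)).imp (((conj l2).imp φ).imp
      ((conj (l1 ++ l2)).imp ψ)))) := by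
    intro v
    simp only [evalP, evalP_conj, List.mem_append]
    intro a b c
    exact a (fun x hx => c x (Or.inl hx)) (b (fun x hx => c x (Or.inr hx)))
  exact ProvK5.mp (ProvK5.mp (ProvK5.taut t) hp1) hp2

/-- Deduction theorem direction we need. -/
lemma derives_insert {Γ : Set F} {φ χ : F} (h : derives (insert φ Γ) χ) :
    derives Γ (φ.imp χ) := by
  obtain ⟨l, hl, hp⟩ := h
  refine ⟨l.filter (· ≠ φ), ?_, ?_⟩
  · intro ψ hψ
    have h1 := List.of_mem_filter hψ
    have h2 := List.mem_of_mem_filter hψ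
    rcases hl ψ h2 with h | h
    · exact absurd h (by simpa using h1)
    · exact h
  · have t : TautInst (((conj l).imp χ).imp ((conj (l.filter (· ≠ φ))).imp (φ.imp χ))) := by
      intro v
      simp only [evalP, evalP_conj]
      intro a b c
      refine a (fun x hx => ?_)
      by_cases hxφ : x = φ
      · subst hxφ; exact c
      · exact b x (List.mem_filter.2 ⟨hx, by simpa using hxφ⟩)
    exact ProvK5.mp (ProvK5.taut t) hp

/-! ### Lindenbaum -/

lemma con_of_not_prov {φ : F} (h : ¬ ProvK5 φ) : Con {F.neg φ} := by
  rintro ⟨l, hl, hp⟩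
  apply h
  have t : TautInst (((conj l).imp falsum).imp φ) := by
    intro v
    simp only [evalP, evalP_conj, falsum]
    intro a
    by_contra hφ
    exact a (fun x hx => by
      have hx' : x = F.neg φ := hl x hx
      subst hx'; simpa [evalP] using hφ) (fun h => h)
  exact ProvK5.mp (ProvK5.taut t) hp

lemma chain_bound {c : Set (Set F)} (hc : IsChain (· ⊆ ·) c) (hne : c.Nonempty) :
    ∀ l : List F, (∀ ψ ∈ l, ψ ∈ ⋃₀ c) → ∃ t ∈ c, ∀ ψ ∈ l, ψ ∈ t := by
  intro l
  induction l with
  | nil => intro _; exact ⟨hne.choose, hne.choose_spec, by simp⟩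
  | cons a l ih =>
      intro h
      obtain ⟨t, htc, htl⟩ := ih (fun ψ hψ => h ψ (List.mem_cons_of_mem a hψ))
      obtain ⟨s, hsc, has⟩ := h a List.mem_cons_self
      rcases hc.total htc hsc with hts | hst
      · exact ⟨s, hsc, fun ψ hψ => by
          rcases List.mem_cons.1 hψ with rfl | hψ
          exacts [has, hts (htl ψ hψ)]⟩
      · exact ⟨t, htc, fun ψ hψ => by
          rcases List.mem_cons.1 hψ with rfl | hψ
          exacts [hst has, htl ψ hψ]⟩

/-- Maximal consistent sets. -/
def MCS (Γ : Set F) : Prop := Con Γ ∧ ∀ ψ : F, ψ ∈ Γ ∨ F.neg ψ ∈ Γ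

lemma con_insert_of_derives {Γ : Set F} {χ : F} (hc : Con Γ) (hd : derives Γ χ) :
    Con (insert χ Γ) := fun hf => hc (derives_mp (derives_insert hf) hd)

lemma derives_neg_of_incon {Γ : Set F} {ψ : F} (h : ¬ Con (insert ψ Γ)) :
    derives Γ (F.neg ψ) := by
  have hd : derives Γ (ψ.imp falsum) := derives_insert (not_not.1 h)
  have t : ProvK5 ((ψ.imp falsum).imp (F.neg ψ)) :=
    ProvK5.taut (fun v => by simp only [evalP, falsum]; tauto)
  exact derives_mp (derives_of_prov t) hd

lemma lindenbaum {Γ : Set F} (h : Con Γ) : ∃ Δ : Set F, Γ ⊆ Δ ∧ MCS Δ := by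
  have H : ∀ c ⊆ {Δ : Set F | Con Δ}, IsChain (· ⊆ ·) c → c.Nonempty →
      ∃ ub ∈ {Δ : Set F | Con Δ}, ∀ s ∈ c, s ⊆ ub := by
    intro c hcS hchain hne
    refine ⟨⋃₀ c, ?_, fun s hs => Set.subset_sUnion_of_mem hs⟩
    rintro ⟨l, hl, hp⟩
    obtain ⟨t, htc, htl⟩ := chain_bound hchain hne l hl
    exact hcS htc ⟨l, htl, hp⟩
  obtain ⟨m, hm, hmax⟩ := zorn_subset_nonempty {Δ | Con Δ} H Γ h
  refine ⟨m, hm, hmax.1, ?_⟩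
  intro ψ
  by_cases h1 : Con (insert ψ m)
  · exact Or.inl ((hmax.2 h1 (Set.subset_insert ψ m)) (Set.mem_insert ψ m))
  · have hd := derives_neg_of_incon h1
    have h2 : Con (insert (F.neg ψ) m) := con_insert_of_derives hmax.1 hd
    exact Or.inr ((hmax.2 h2 (Set.subset_insert _ m)) (Set.mem_insert _ m))

/-! ### MCS facts -/

lemma MCS.mem_of_derives {Γ : Set F} (h : MCS Γ) {ψ : F} (hd : derives Γ ψ) : ψ ∈ Γ := by
  rcases h.2 ψ with hψ | hψ
  · exact hψ
  · exfalso
    apply h.1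
    have t : ProvK5 (ψ.imp ((F.neg ψ).imp falsum)) :=
      ProvK5.taut (fun v => by simp only [evalP, falsum]; tauto)
    exact derives_mp (derives_mp (derives_of_prov t) hd) (derives_of_mem hψ)

lemma MCS.mem_of_prov {Γ : Set F} (h : MCS Γ) {ψ : F} (hp : ProvK5 ψ) : ψ ∈ Γ :=
  h.mem_of_derives (derives_of_prov hp)

lemma MCS.mp_mem {Γ : Set F} (h : MCS Γ) {φ ψ : F} (h1 : φ.imp ψ ∈ Γ) (h2 : φ ∈ Γ) : ψ ∈ Γ :=
  h.mem_of_derives (derives_mp (derives_of_mem h1) (derives_of_mem h2))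

lemma MCS.neg_mem_iff {Γ : Set F} (h : MCS Γ) {ψ : F} : F.neg ψ ∈ Γ ↔ ψ ∉ Γ := by
  constructor
  · intro h1 h2
    apply h.1
    have t : ProvK5 (ψ.imp ((F.neg ψ).imp falsum)) :=
      ProvK5.taut (fun v => by simp only [evalP, falsum]; tauto)
    exact derives_mp (derives_mp (derives_of_prov t) (derives_of_mem h2)) (derives_of_mem h1)
  · intro h1
    rcases h.2 ψ with h2 | h2
    · exact absurd h2 h1
    · exact h2

lemma MCS.imp_mem_iff {Γ : Set F} (h : MCS Γ) {φ ψ : F} :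
    φ.imp ψ ∈ Γ ↔ (φ ∈ Γ → ψ ∈ Γ) := by
  constructor
  · exact fun h1 h2 => h.mp_mem h1 h2
  · intro h1
    by_cases hφ : φ ∈ Γ
    · have t : ProvK5 (ψ.imp (φ.imp ψ)) := ProvK5.taut (fun v => by simp [evalP]; tauto)
      exact h.mp_mem (h.mem_of_prov t) (h1 hφ)
    · have hn : F.neg φ ∈ Γ := h.neg_mem_iff.2 hφ
      have t : ProvK5 ((F.neg φ).imp (φ.imp ψ)) := ProvK5.taut (fun v => by simp [evalP]; tauto)
      exact h.mp_mem (h.mem_of_prov t) hn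

/-! ### Modal lemmas -/

lemma prov_K' {a b : F} (h : ProvK5 (a.imp b)) : ProvK5 ((F.box a).imp (F.box b)) :=
  ProvK5.mp (ProvK5.axK a b) (ProvK5.nec h)

lemma box_conj : ∀ l : List F, ProvK5 ((conj (l.map F.box)).imp (F.box (conj l)))
  | [] => by
      have h1 : ProvK5 (conj []) := ProvK5.taut (fun v => by simp [conj, evalP])
      have h2 : ProvK5 (F.box (conj [])) := ProvK5.nec h1
      exact ProvK5.mp (ProvK5.taut (fun v => by simp only [evalP]; tauto)) h2
  | a :: l => by
      have ih := box_conj l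
      have t1 : ProvK5 (a.imp ((conj l).imp (conj (a :: l)))) :=
        ProvK5.taut (fun v => by simp only [conj, evalP]; tauto)
      have h1 : ProvK5 ((F.box a).imp (F.box ((conj l).imp (conj (a :: l))))) := prov_K' t1
      have h2 := ProvK5.axK (conj l) (conj (a :: l))
      refine ProvK5.mp (ProvK5.mp (ProvK5.mp (ProvK5.taut ?_) h1) h2) ih
      intro v
      simp only [List.map_cons, conj, evalP, F.box]
      tauto

/-! ### Canonical model -/

def CW : Type := {Γ : Set F // MCS Γ}

def canR (Γ Δ : CW) : Prop := ∀ ψ : F, F.box ψ ∈ Γ.1 → ψ ∈ Δ.1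

def canM : Model := { W := CW, R := canR, V := fun n Γ => F.var n ∈ Γ.1 }

lemma MCS.dual_mem {Γ : Set F} (h : MCS Γ) (ψ : F) :
    F.dia ψ ∈ Γ ↔ F.neg (F.box (F.neg ψ)) ∈ Γ := by
  have hd := h.mem_of_prov (ProvK5.axDual ψ)
  constructor
  · intro h1
    have t : ProvK5 (((F.dia ψ).iff' (F.neg (F.box (F.neg ψ)))).imp
        ((F.dia ψ).imp (F.neg (F.box (F.neg ψ))))) :=
      ProvK5.taut (fun v => by simp only [F.iff', F.box, evalP]; tauto)
    exact h.mp_mem (h.mp_mem (h.mem_of_prov t) hd) h1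
  · intro h1
    have t : ProvK5 (((F.dia ψ).iff' (F.neg (F.box (F.neg ψ)))).imp
        ((F.neg (F.box (F.neg ψ))).imp (F.dia ψ))) :=
      ProvK5.taut (fun v => by simp only [F.iff', F.box, evalP]; tauto)
    exact h.mp_mem (h.mp_mem (h.mem_of_prov t) hd) h1

lemma MCS.box_neg_mem_iff {Γ : Set F} (h : MCS Γ) (ψ : F) :
    F.box (F.neg ψ) ∈ Γ ↔ F.dia ψ ∉ Γ := by
  rw [h.dual_mem ψ, h.neg_mem_iff]
  tauto

lemma existence {Γ : Set F} (h : MCS Γ) {ψ : F} (hd : F.dia ψ ∈ Γ) :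
    ∃ Δ : Set F, MCS Δ ∧ ψ ∈ Δ ∧ ∀ χ, F.box χ ∈ Γ → χ ∈ Δ := by
  have hcon : Con (insert ψ {χ | F.box χ ∈ Γ}) := by
    intro hf
    have h1 : derives {χ | F.box χ ∈ Γ} (ψ.imp falsum) := derives_insert hf
    have h2 : derives {χ | F.box χ ∈ Γ} (F.neg ψ) := by
      have t : ProvK5 ((ψ.imp falsum).imp (F.neg ψ)) :=
        ProvK5.taut (fun v => by simp only [evalP, falsum]; tauto)
      exact derives_mp (derives_of_prov t) h1
    obtain ⟨l, hl, hp⟩ := h2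
    have hbb : ProvK5 ((F.box (conj l)).imp (F.box (F.neg ψ))) := prov_K' hp
    have hb : ProvK5 ((conj (l.map F.box)).imp (F.box (F.neg ψ))) := by
      refine ProvK5.mp (ProvK5.mp (ProvK5.taut ?_) (box_conj l)) hbb
      intro v; simp only [evalP]; tauto
    have hder : derives Γ (F.box (F.neg ψ)) := by
      refine ⟨l.map F.box, ?_, hb⟩
      intro x hx
      obtain ⟨y, hy, rfl⟩ := List.mem_map.1 hx
      exact hl y hy
    exact (h.box_neg_mem_iff ψ).1 (h.mem_of_derives hder) hd
  obtain ⟨Δ, hsub, hΔ⟩ := lindenbaum hcon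
  exact ⟨Δ, hΔ, hsub (Set.mem_insert _ _), fun χ hχ => hsub (Set.mem_insert_of_mem _ hχ)⟩

lemma canR_euclidean : Euclidean canR := by
  intro Γ Δ Θ h1 h2 ψ hψ
  by_cases hb : F.box ψ ∈ Γ.1
  · exact h2 ψ hb
  · exfalso
    have h5 : F.dia (F.box ψ) ∉ Γ.1 := fun hc =>
      hb (Γ.2.mp_mem (Γ.2.mem_of_prov (ProvK5.ax5 ψ)) hc)
    have hbn : F.box (F.neg (F.box ψ)) ∈ Γ.1 := (Γ.2.box_neg_mem_iff _).2 h5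
    exact (Δ.2.neg_mem_iff.1 (h1 _ hbn)) hψ

lemma truth_lemma : ∀ (ψ : F) (Γ : CW), canM.sat Γ ψ ↔ ψ ∈ Γ.1
  | .var n, Γ => Iff.rfl
  | .neg ψ, Γ => by
      have : canM.sat Γ (F.neg ψ) ↔ ¬ canM.sat Γ ψ := Iff.rfl
      rw [this, truth_lemma ψ Γ, Γ.2.neg_mem_iff]
  | .imp φ ψ, Γ => by
      have : canM.sat Γ (F.imp φ ψ) ↔ (canM.sat Γ φ → canM.sat Γ ψ) := Iff.rfl
      rw [this, truth_lemma φ Γ, truth_lemma ψ Γ, Γ.2.imp_mem_iff]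
  | .dia ψ, Γ => by
      constructor
      · rintro ⟨Δ, hR, hs⟩
        by_contra hc
        have hb : F.box (F.neg ψ) ∈ Γ.1 := (Γ.2.box_neg_mem_iff ψ).2 hc
        exact Δ.2.neg_mem_iff.1 (hR _ hb) ((truth_lemma ψ Δ).1 hs)
      · intro hd
        obtain ⟨Δ, hΔ, hψ, hbox⟩ := existence Γ.2 hd
        exact ⟨⟨Δ, hΔ⟩, hbox, (truth_lemma ψ ⟨Δ, hΔ⟩).2 hψ⟩

lemma completeness {φ : F} (h : ¬ ProvK5 φ) : ∃ Γ : CW, ¬ canM.sat Γ φ := by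
  obtain ⟨Δ, hsub, hΔ⟩ := lindenbaum (con_of_not_prov h)
  refine ⟨⟨Δ, hΔ⟩, ?_⟩
  refine (truth_lemma φ ⟨Δ, hΔ⟩).not.2 ?_
  exact hΔ.neg_mem_iff.1 (hsub rfl)

/-! ### Subformulas -/

def subs : F → List F
  | .var n => [.var n]
  | .neg a => .neg a :: subs a
  | .imp a b => .imp a b :: (subs a ++ subs b)
  | .dia a => .dia a :: subs a

lemma self_mem_subs (φ : F) : φ ∈ subs φ := by cases φ <;> simp [subs]

lemma subs_neg : ∀ φ ψ : F, F.neg ψ ∈ subs φ → ψ ∈ subs φ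
  | .var n, ψ, h => by simp [subs] at h
  | .neg a, ψ, h => by
      simp only [subs, List.mem_cons] at h ⊢
      rcases h with h | h
      · obtain rfl : ψ = a := F.neg.inj h
        exact Or.inr (self_mem_subs _)
      · exact Or.inr (subs_neg a ψ h)
  | .imp a b, ψ, h => by
      simp only [subs, List.mem_cons, List.mem_append] at h ⊢
      rcases h with h | h | h
      · exact absurd h (by simp)
      · exact Or.inr (Or.inl (subs_neg a ψ h))
      · exact Or.inr (Or.inr (subs_neg b ψ h))
  | .dia a, ψ, h => by
      simp only [subs, List.mem_cons] at h ⊢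
      rcases h with h | h
      · exact absurd h (by simp)
      · exact Or.inr (subs_neg a ψ h)

lemma subs_imp : ∀ φ a b : F, F.imp a b ∈ subs φ → a ∈ subs φ ∧ b ∈ subs φ
  | .var n, a, b, h => by simp [subs] at h
  | .neg c, a, b, h => by
      simp only [subs, List.mem_cons] at h ⊢
      rcases h with h | h
      · exact absurd h (by simp)
      · exact ⟨Or.inr (subs_imp c a b h).1, Or.inr (subs_imp c a b h).2⟩
  | .imp c d, a, b, h => by
      simp only [subs, List.mem_cons, List.mem_append] at h ⊢
      rcases h with h | h | h
      · obtain ⟨rfl, rfl⟩ : a = c ∧ b = d := by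
          injection h with h1 h2; exact ⟨h1, h2⟩
        exact ⟨Or.inr (Or.inl (self_mem_subs _)), Or.inr (Or.inr (self_mem_subs _))⟩
      · exact ⟨Or.inr (Or.inl (subs_imp c a b h).1), Or.inr (Or.inl (subs_imp c a b h).2)⟩
      · exact ⟨Or.inr (Or.inr (subs_imp d a b h).1), Or.inr (Or.inr (subs_imp d a b h).2)⟩
  | .dia c, a, b, h => by
      simp only [subs, List.mem_cons] at h ⊢
      rcases h with h | h
      · exact absurd h (by simp)
      · exact ⟨Or.inr (subs_imp c a b h).1, Or.inr (subs_imp c a b h).2⟩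

lemma subs_dia : ∀ φ a : F, F.dia a ∈ subs φ → a ∈ subs φ
  | .var n, a, h => by simp [subs] at h
  | .neg c, a, h => by
      simp only [subs, List.mem_cons] at h ⊢
      rcases h with h | h
      · exact absurd h (by simp)
      · exact Or.inr (subs_dia c a h)
  | .imp c d, a, h => by
      simp only [subs, List.mem_cons, List.mem_append] at h ⊢
      rcases h with h | h | h
      · exact absurd h (by simp)
      · exact Or.inr (Or.inl (subs_dia c a h))
      · exact Or.inr (Or.inr (subs_dia d a h))
  | .dia c, a, h => by
      simp only [subs, List.mem_cons] at h ⊢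
      rcases h with h | h
      · obtain rfl : a = c := F.dia.inj h
        exact Or.inr (self_mem_subs _)
      · exact Or.inr (subs_dia c a h)

/-! ### Generated cluster of a Euclidean model -/

inductive Reach (M : Model) (w0 : M.W) : M.W → Prop
  | base {u} : M.R w0 u → Reach M w0 u
  | step {u v} : Reach M w0 u → M.R u v → Reach M w0 v

variable {M : Model} {w0 : M.W}

lemma reach_refl (hE : Euclidean M.R) {u} (h : Reach M w0 u) : M.R u u := by
  induction h with
  | base h => exact hE _ _ _ h h
  | step h hr ih => exact hE _ _ _ hr hr

lemma reach_base_all (hE : Euclidean M.R) {u} (h : Reach M w0 u) :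
    ∀ v, M.R w0 v → M.R u v := by
  induction h with
  | base h => exact fun v hv => hE _ _ _ h hv
  | step h hr ih => exact fun v hv => hE _ _ _ hr (ih v hv)

lemma reach_clique (hE : Euclidean M.R) {u v} (hu : Reach M w0 u) (hv : Reach M w0 v) :
    M.R u v := by
  induction hv with
  | base h => exact reach_base_all hE hu _ h
  | step h hr ih => exact hE _ _ _ (hE _ _ _ ih (reach_refl hE hu)) hr

/-! ### The finite model -/

noncomputable def code (M : Model) (L : List F) (u : M.W) : Fin L.length → Bool :=
  fun i => @decide (M.sat u (L.get i)) (Classical.propDecidable _)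

lemma code_eq_true {M : Model} {L : List F} {u : M.W} {i : Fin L.length} :
    code M L u i = true ↔ M.sat u (L.get i) :=
  @decide_eq_true_iff _ (Classical.propDecidable _)

noncomputable def finM (M : Model) (w0 : M.W) (L : List F) : Model where
  W := Option (Fin L.length → Bool)
  R := fun w v => match v with
    | none => False
    | some g => match w with
      | none => ∃ u, M.R w0 u ∧ code M L u = g
      | some _ => ∃ u, Reach M w0 u ∧ code M L u = g
  V := fun m w => match w with
    | none => M.V m w0
    | some g => ∃ i : Fin L.length, L.get i = F.var m ∧ g i = true

lemma finM_euclid (L : List F) : Euclidean (finM M w0 L).R := by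
  intro w u v h1 h2
  cases u with
  | none => exact h1.elim
  | some gu =>
    cases v with
    | none => exact h2.elim
    | some gv =>
      cases w with
      | none =>
        obtain ⟨x, hx, hcx⟩ := h2
        exact ⟨x, Reach.base hx, hcx⟩
      | some gw => exact h2

lemma fin_truth (hE : Euclidean M.R) (L : List F)
    (hneg : ∀ ψ, F.neg ψ ∈ L → ψ ∈ L)
    (himp : ∀ a b, F.imp a b ∈ L → a ∈ L ∧ b ∈ L)
    (hdia : ∀ a, F.dia a ∈ L → a ∈ L) :
    ∀ ψ : F, ψ ∈ L →
      (∀ u : M.W, Reach M w0 u →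
        ((finM M w0 L).sat (some (code M L u)) ψ ↔ M.sat u ψ)) ∧
      ((finM M w0 L).sat (none : Option (Fin L.length → Bool)) ψ ↔ M.sat w0 ψ) := by
  intro ψ
  induction ψ with
  | var m =>
    intro hm
    constructor
    · intro u hu
      show (∃ i : Fin L.length, L.get i = F.var m ∧ code M L u i = true) ↔ M.sat u (F.var m)
      constructor
      · rintro ⟨i, hi, hg⟩
        have := code_eq_true.1 hg
        rwa [hi] at this
      · intro hs
        obtain ⟨i, hi⟩ := List.mem_iff_get.1 hm
        exact ⟨i, hi, code_eq_true.2 (by rwa [hi])⟩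
    · exact Iff.rfl
  | neg a ih =>
    intro hm
    have ha := ih (hneg a hm)
    constructor
    · intro u hu
      show ¬ _ ↔ ¬ _
      exact not_congr (ha.1 u hu)
    · exact not_congr ha.2
  | imp a b iha ihb =>
    intro hm
    have ha := iha (himp a b hm).1
    have hb := ihb (himp a b hm).2
    constructor
    · intro u hu
      show (_ → _) ↔ (_ → _)
      exact imp_congr (ha.1 u hu) (hb.1 u hu)
    · exact imp_congr ha.2 hb.2
  | dia a ih =>
    intro hm
    have ha := ih (hdia a hm)
    constructor
    · intro u hu
      constructor
      · rintro ⟨vg, hR, hs⟩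
        cases vg with
        | none => exact hR.elim
        | some g =>
          obtain ⟨x, hx, rfl⟩ := hR
          exact ⟨x, reach_clique hE hu hx, (ha.1 x hx).1 hs⟩
      · rintro ⟨x, hux, hxa⟩
        have hx : Reach M w0 x := Reach.step hu hux
        exact ⟨some (code M L x), ⟨x, hx, rfl⟩, (ha.1 x hx).2 hxa⟩
    · constructor
      · rintro ⟨vg, hR, hs⟩
        cases vg with
        | none => exact hR.elim
        | some g =>
          obtain ⟨x, hx, rfl⟩ := hR
          exact ⟨x, hx, (ha.1 x (Reach.base hx)).1 hs⟩
      · rintro ⟨x, hx, hxa⟩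
        exact ⟨some (code M L x), ⟨x, hx, rfl⟩, (ha.1 x (Reach.base hx)).2 hxa⟩

lemma finitize (φ : F) (M : Model) (hE : Euclidean M.R) (w0 : M.W) (hw : ¬ M.sat w0 φ) :
    ∃ M' : Model, Euclidean M'.R ∧ Finite M'.W ∧ ∃ w : M'.W, ¬ M'.sat w φ := by
  refine ⟨finM M w0 (subs φ), finM_euclid (subs φ), ?_, none, ?_⟩
  · show Finite (Option (Fin (subs φ).length → Bool))
    infer_instance
  · intro hc
    exact hw (((fin_truth hE (subs φ) (subs_neg φ) (subs_imp φ) (subs_dia φ) φ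
      (self_mem_subs φ)).2).1 hc)

end K5FMP


/-- K5 has the finite model property: every formula not provable in K5 is falsified in a
finite Kripke model based on a Euclidean frame. -/
theorem K5_fmp (φ : F) (h : ¬ ProvK5 φ) :
    ∃ M : Model, Euclidean M.R ∧ Finite M.W ∧ ∃ w : M.W, ¬ M.sat w φ := by
  obtain ⟨Γ, hΓ⟩ := K5FMP.completeness h
  exact K5FMP.finitize φ K5FMP.canM K5FMP.canR_euclidean Γ hΓ
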